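/- (Theorem 1: Noadd is D-competitive on increasing trees) For every MLAPD instance of depth D whose tree is increasing, i.e. c(par v) ≤ c(v) for every node v, the cost of the schedule produced by the Noadd algorithm is at most D times the cost of every feasible schedule of the instance. -/

import Mathlib

open Classical

variable {V : Type} [Fintype V] [DecidableEq V] {Req : Type} [Fintype Req]

/-- The root path of `v`: the set of nodes of the form `par^[n] v`, i.e. `v` and its ancestors. -/
noncomputable def rootPath (par : V → V) (v : V) : Finset V :=
  Finset.univ.filter (fun u => ∃ n : ℕ, par^[n] v = u)

/-- The level of a node: the cardinality of its root path (the root has level 1). -/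
noncomputable def level (par : V → V) (v : V) : ℕ :=
  (rootPath par v).card

/-- The depth `D` of the instance: the maximum level over all nodes. -/
noncomputable def depth (par : V → V) : ℕ :=
  Finset.univ.sup (level par)

/-- A valid service tree: contains the root and is closed under the parent map. -/
def IsServiceTree (r : V) (par : V → V) (S : Finset V) : Prop :=
  r ∈ S ∧ ∀ u ∈ S, par u ∈ S

/-- A service `(S, t)` satisfies a request `ρ` if the node of `ρ` lies in `S`
and `t` lies in the time window `[arr ρ, dl ρ]`. -/
def SatisfiedBy (node : Req → V) (arr dl : Req → ℝ) (S : Finset V) (t : ℝ) (ρ : Req) : Prop :=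
  node ρ ∈ S ∧ arr ρ ≤ t ∧ t ≤ dl ρ

/-- The cost of a service subtree. -/
noncomputable def serviceCost (c : V → ℝ) (S : Finset V) : ℝ :=
  ∑ u ∈ S, c u

/-- The cost of a schedule: the sum of the costs of its services. -/
noncomputable def scheduleCost (c : V → ℝ) (sched : List (Finset V × ℝ)) : ℝ :=
  (sched.map fun s => serviceCost c s.1).sum

/-- A schedule is feasible if each of its members is a valid service and every
request is satisfied by some service of the schedule. -/
def Feasible (r : V) (par : V → V) (node : Req → V) (arr dl : Req → ℝ)
    (sched : List (Finset V × ℝ)) : Prop :=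
  (∀ s ∈ sched, IsServiceTree r par s.1) ∧
  ∀ ρ : Req, ∃ s ∈ sched, SatisfiedBy node arr dl s.1 s.2 ρ

/-- The list of all requests, sorted in increasing order of deadline. -/
noncomputable def sortedReqs (dl : Req → ℝ) : List Req :=
  (Finset.univ : Finset Req).toList.mergeSort (fun a b => decide (dl a ≤ dl b))

/-- The Noadd algorithm, processing requests in increasing deadline order:
when the deadline of a request `ρ` not satisfied by any earlier Noadd service is reached,
transmit the service `(P(v(ρ)), d(ρ))`. -/
noncomputable def noaddAux (par : V → V) (node : Req → V) (arr dl : Req → ℝ) :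
    List Req → List (Finset V × ℝ) → List (Finset V × ℝ)
  | [], acc => acc
  | ρ :: rest, acc =>
    if ∃ s ∈ acc, SatisfiedBy node arr dl s.1 s.2 ρ then
      noaddAux par node arr dl rest acc
    else
      noaddAux par node arr dl rest (acc ++ [(rootPath par (node ρ), dl ρ)])

/-- The schedule produced by the Noadd algorithm. -/
noncomputable def noadd (par : V → V) (node : Req → V) (arr dl : Req → ℝ) :
    List (Finset V × ℝ) :=
  noaddAux par node arr dl (sortedReqs dl) []


/-- Structure of the `noaddAux` output: it appends services for a sublist `T` of triggering
requests, pairwise unsatisfied by earlier triggering services, and unsatisfied by `acc`. -/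
theorem noaddAux_spec (par : V → V) (node : Req → V) (arr dl : Req → ℝ)
    (l : List Req) (acc : List (Finset V × ℝ)) :
    ∃ T : List Req, T.Sublist l ∧
      noaddAux par node arr dl l acc
        = acc ++ T.map (fun ρ => (rootPath par (node ρ), dl ρ)) ∧
      T.Pairwise (fun ρ ρ' => ¬ SatisfiedBy node arr dl (rootPath par (node ρ)) (dl ρ) ρ') ∧
      ∀ ρ' ∈ T, ∀ s ∈ acc, ¬ SatisfiedBy node arr dl s.1 s.2 ρ' := by
  induction l generalizing acc with
  | nil => exact ⟨[], by simp [noaddAux]⟩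
  | cons ρ l ih =>
    by_cases h : ∃ s ∈ acc, SatisfiedBy node arr dl s.1 s.2 ρ
    · obtain ⟨T, hsub, heq, hpw, hacc⟩ := ih acc
      refine ⟨T, hsub.cons _, ?_, hpw, hacc⟩
      rw [noaddAux, if_pos h]; exact heq
    · obtain ⟨T, hsub, heq, hpw, hacc⟩ := ih (acc ++ [(rootPath par (node ρ), dl ρ)])
      refine ⟨ρ :: T, hsub.cons₂ _, ?_, ?_, ?_⟩
      · rw [noaddAux, if_neg h, heq]; simp
      · refine List.pairwise_cons.mpr ⟨fun ρ' hρ' => ?_, hpw⟩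
        exact hacc ρ' hρ' (rootPath par (node ρ), dl ρ) (by simp)
      · rintro ρ' hρ' s hs
        rcases List.mem_cons.mp hρ' with h1 | h1
        · subst h1; exact fun hsat => h ⟨s, hs, hsat⟩
        · exact hacc ρ' h1 s (by simp [hs])

theorem scheduleCost_eq_sum_get (c : V → ℝ) (L : List (Finset V × ℝ)) :
    scheduleCost c L = ∑ i : Fin L.length, serviceCost c (L.get i).1 := by
  induction L with
  | nil => simp [scheduleCost]
  | cons s L ih => simp [scheduleCost, Fin.sum_univ_succ, ih]; simp [scheduleCost] at ih; rw [ih]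

theorem serviceCost_rootPath_le (par : V → V) (c : V → ℝ)
    (hc : ∀ v, 0 < c v) (hinc : ∀ v, c (par v) ≤ c v) (v : V) :
    serviceCost c (rootPath par v) ≤ (depth par : ℝ) * c v := by
  have hiter : ∀ n : ℕ, c (par^[n] v) ≤ c v := by
    intro n
    induction n with
    | zero => simp
    | succ k ih => rw [Function.iterate_succ_apply']; exact (hinc _).trans ih
  have h1 : ∀ u ∈ rootPath par v, c u ≤ c v := by
    intro u hu
    obtain ⟨n, hn⟩ := (Finset.mem_filter.mp hu).2
    exact hn ▸ hiter n
  calc serviceCost c (rootPath par v) ≤ (rootPath par v).card • c v :=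
        Finset.sum_le_card_nsmul _ _ _ h1
    _ = ((level par v : ℕ) : ℝ) * c v := by rw [nsmul_eq_mul]; rfl
    _ ≤ (depth par : ℝ) * c v := by
        refine mul_le_mul_of_nonneg_right ?_ (hc v).le
        exact_mod_cast Finset.le_sup (f := level par) (Finset.mem_univ v)

/-- **Theorem 1**: Noadd is `D`-competitive on increasing trees. -/
theorem noadd_D_competitive
    (r : V) (par : V → V) (c : V → ℝ) (node : Req → V) (arr dl : Req → ℝ)
    (hroot : par r = r) (hreach : ∀ v : V, ∃ n : ℕ, par^[n] v = r)
    (hc : ∀ v, 0 < c v) (harr : ∀ ρ, arr ρ ≤ dl ρ) (hdl : Function.Injective dl)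
    (hinc : ∀ v, c (par v) ≤ c v)
    (OPT : List (Finset V × ℝ)) (hOPT : Feasible r par node arr dl OPT) :
    scheduleCost c (noadd par node arr dl) ≤ (depth par : ℝ) * scheduleCost c OPT := by
  classical
  obtain ⟨T, hsub, heq, hpw, -⟩ := noaddAux_spec par node arr dl (sortedReqs dl) []
  -- `sortedReqs` is sorted by deadline and has no duplicates
  have hperm : (sortedReqs dl).Perm (Finset.univ : Finset Req).toList :=
    List.mergeSort_perm _ _
  have hnodupT : T.Nodup := hsub.nodup (hperm.nodup_iff.mpr (Finset.nodup_toList _))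
  have hsorted : (sortedReqs dl).Pairwise (fun a b => dl a ≤ dl b) := by
    have := List.pairwise_mergeSort (le := fun a b : Req => decide (dl a ≤ dl b))
      (fun a b c hab hbc => by
        simp only [decide_eq_true_eq] at *; exact le_trans hab hbc)
      (fun a b => by simp only [Bool.or_eq_true, decide_eq_true_eq]; exact le_total _ _)
      (Finset.univ : Finset Req).toList
    exact this.imp (fun h => by simpa using h)
  have hTsorted : T.Pairwise (fun a b => dl a ≤ dl b) := hsorted.sublist hsub
  have hpw2 := hpw.and hTsorted
  have hsym : ∀ a ∈ T, ∀ b ∈ T, a ≠ b →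
      (¬ SatisfiedBy node arr dl (rootPath par (node a)) (dl a) b ∧ dl a ≤ dl b) ∨
      (¬ SatisfiedBy node arr dl (rootPath par (node b)) (dl b) a ∧ dl b ≤ dl a) := by
    intro a ha b hb hab
    have hsymm : Symmetric (fun a b : Req =>
        (¬ SatisfiedBy node arr dl (rootPath par (node a)) (dl a) b ∧ dl a ≤ dl b) ∨
        (¬ SatisfiedBy node arr dl (rootPath par (node b)) (dl b) a ∧ dl b ≤ dl a)) :=
      fun x y h => h.symm
    haveI : Std.Symm (fun a b : Req =>
        (¬ SatisfiedBy node arr dl (rootPath par (node a)) (dl a) b ∧ dl a ≤ dl b) ∨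
        (¬ SatisfiedBy node arr dl (rootPath par (node b)) (dl b) a ∧ dl b ≤ dl a)) :=
      ⟨fun x y h => hsymm h⟩
    exact List.Pairwise.forall (R := fun a b : Req =>
        (¬ SatisfiedBy node arr dl (rootPath par (node a)) (dl a) b ∧ dl a ≤ dl b) ∨
        (¬ SatisfiedBy node arr dl (rootPath par (node b)) (dl b) a ∧ dl b ≤ dl a))
      (hpw2.imp (fun h => Or.inl h)) ha hb hab
  -- charge each request to an OPT service satisfying it
  have hidx : ∀ ρ : Req, ∃ i : Fin OPT.length,
      SatisfiedBy node arr dl (OPT.get i).1 (OPT.get i).2 ρ := by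
    intro ρ
    obtain ⟨s, hs, h⟩ := hOPT.2 ρ
    obtain ⟨i, hi⟩ := List.mem_iff_get.mp hs
    exact ⟨i, by rw [hi]; exact h⟩
  choose σ hσ using hidx
  have hself : ∀ v : V, v ∈ rootPath par v := by
    intro v; exact Finset.mem_filter.mpr ⟨Finset.mem_univ _, ⟨0, rfl⟩⟩
  -- distinct triggering requests charged to the same OPT service occupy distinct nodes
  have hkey : ∀ a ∈ T, ∀ b ∈ T, a ≠ b → σ a = σ b → node a ≠ node b := by
    intro a ha b hb hab hσab hnode
    rcases hsym a ha b hb hab with ⟨hns, hle⟩ | ⟨hns, hle⟩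
    · refine hns ⟨hnode ▸ hself (node a), (hσ b).2.1.trans ?_, hle⟩
      have := (hσ a).2.2; rw [hσab] at this; exact this
    · refine hns ⟨hnode ▸ hself (node b), (hσ a).2.1.trans ?_, hle⟩
      have := (hσ b).2.2; rw [← hσab] at this; exact this
  set A : Finset Req := T.toFinset with hA
  have hD0 : (0:ℝ) ≤ (depth par : ℝ) := Nat.cast_nonneg _
  -- cost of Noadd
  have hnoadd : scheduleCost c (noadd par node arr dl)
      = (T.map (fun ρ => serviceCost c (rootPath par (node ρ)))).sum := by
    rw [noadd, heq]; simp only [List.nil_append, scheduleCost, List.map_map]; rfl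
  have step1 : scheduleCost c (noadd par node arr dl)
      ≤ (depth par : ℝ) * ∑ ρ ∈ A, c (node ρ) := by
    rw [hnoadd, hA, List.sum_toFinset _ hnodupT, ← List.sum_map_mul_left]
    exact List.sum_le_sum (fun ρ _ => serviceCost_rootPath_le par c hc hinc (node ρ))
  have step2 : ∑ ρ ∈ A, c (node ρ) ≤ scheduleCost c OPT := by
    rw [scheduleCost_eq_sum_get, ← Finset.sum_fiberwise A σ (fun ρ => c (node ρ))]
    refine Finset.sum_le_sum (fun i _ => ?_)
    set B := A.filter (fun ρ => σ ρ = i) with hB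
    have hinj : ∀ a ∈ B, ∀ b ∈ B, node a = node b → a = b := by
      intro a ha b hb hnode
      rw [hB, Finset.mem_filter, hA, List.mem_toFinset] at ha hb
      by_contra hab
      exact hkey a ha.1 b hb.1 hab (ha.2.trans hb.2.symm) hnode
    have hss : B.image node ⊆ (OPT.get i).1 := by
      intro u hu
      obtain ⟨ρ, hρ, rfl⟩ := Finset.mem_image.mp hu
      rw [hB, Finset.mem_filter] at hρ
      have := (hσ ρ).1; rw [hρ.2] at this; exact this
    calc ∑ ρ ∈ B, c (node ρ) = ∑ u ∈ B.image node, c u := (Finset.sum_image hinj).symm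
      _ ≤ ∑ u ∈ (OPT.get i).1, c u :=
          Finset.sum_le_sum_of_subset_of_nonneg hss (fun u _ _ => (hc u).le)
      _ = serviceCost c (OPT.get i).1 := rfl
  calc scheduleCost c (noadd par node arr dl)
      ≤ (depth par : ℝ) * ∑ ρ ∈ A, c (node ρ) := step1
    _ ≤ (depth par : ℝ) * scheduleCost c OPT := mul_le_mul_of_nonneg_left step2 hD0
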